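/- Let ν be a Borel probability measure on ℝ^d, let λ > 0, r > 0, and define F(λ, r) = {x : ν(B(x, 2r)) > λ·ν(B(x, r))}. Then there exists a constant C > 0 depending only on the dimension d (and not on r, λ, or ν) such that ν(F(λ, r)) ≤ C/λ. -/

import Mathlib

open MeasureTheory Metric Set ENNReal

lemma packing_bound (d : ℕ) {r : ℝ} (hr : 0 < r) {ι : Type} [Countable ι]
    (c : ι → EuclideanSpace ℝ (Fin d))
    (hd : Pairwise (Function.onFun Disjoint fun j => closedBall (c j) r))
    (y : EuclideanSpace ℝ (Fin d)) :
    ∑' j, (closedBall (c j) (2 * r)).indicator (1 : EuclideanSpace ℝ (Fin d) → ℝ≥0∞) y ≤ 3 ^ d := by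
  classical
  rw [ENNReal.tsum_eq_iSup_sum]
  refine iSup_le fun T => ?_
  set T' := T.filter (fun j => y ∈ closedBall (c j) (2 * r)) with hT'
  have hsum : ∑ j ∈ T, (closedBall (c j) (2 * r)).indicator (1 : EuclideanSpace ℝ (Fin d) → ℝ≥0∞) y
      = (T'.card : ℝ≥0∞) := by
    simp only [Set.indicator_apply, Pi.one_apply, hT']
    rw [Finset.sum_boole]
  rw [hsum]
  -- volume argument
  set μ : Measure (EuclideanSpace ℝ (Fin d)) := volume with hμ
  set V : ℝ≥0∞ := ENNReal.ofReal (r ^ d) * μ (closedBall 0 1) with hV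
  have hball : ∀ x : EuclideanSpace ℝ (Fin d), μ (closedBall x r) = V := by
    intro x
    rw [hV, Measure.addHaar_closedBall' μ x hr.le, finrank_euclideanSpace_fin]
  have hVpos : V ≠ 0 := by
    have h1 : (0 : ℝ≥0∞) < μ (closedBall 0 1) := measure_closedBall_pos μ _ one_pos
    have h2 : (0 : ℝ) < r ^ d := pow_pos hr d
    rw [hV]
    exact mul_ne_zero (ENNReal.ofReal_pos.2 h2).ne' h1.ne'
  have hVlt : V ≠ ∞ := by
    refine ENNReal.mul_ne_top ENNReal.ofReal_ne_top ?_
    exact measure_closedBall_lt_top.ne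
  have hdisj : (T' : Set ι).PairwiseDisjoint (fun j => closedBall (c j) r) :=
    fun a _ b _ hab => hd hab
  have hsub : (⋃ j ∈ T', closedBall (c j) r) ⊆ closedBall y (3 * r) := by
    intro z hz
    simp only [Set.mem_iUnion] at hz
    obtain ⟨j, hj, hzj⟩ := hz
    have hjy : dist (c j) y ≤ 2 * r := by
      have := (Finset.mem_filter.1 hj).2
      simpa [dist_comm] using this
    have : dist z y ≤ dist z (c j) + dist (c j) y := dist_triangle _ _ _
    simp only [mem_closedBall] at hzj ⊢
    linarith
  have hcard : (T'.card : ℝ≥0∞) * V ≤ (3 : ℝ≥0∞) ^ d * V := by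
    calc (T'.card : ℝ≥0∞) * V = ∑ j ∈ T', μ (closedBall (c j) r) := by
          simp [hball, Finset.sum_const, mul_comm]
      _ = μ (⋃ j ∈ T', closedBall (c j) r) :=
          (measure_biUnion_finset hdisj fun j _ => measurableSet_closedBall).symm
      _ ≤ μ (closedBall y (3 * r)) := measure_mono hsub
      _ = (3 : ℝ≥0∞) ^ d * V := by
          rw [Measure.addHaar_closedBall' μ y (by linarith : (0:ℝ) ≤ 3 * r),
            finrank_euclideanSpace_fin, hV, mul_pow, ENNReal.ofReal_mul (by positivity),
            ← mul_assoc, ENNReal.ofReal_pow (by norm_num)]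
          norm_num
  exact (ENNReal.mul_le_mul_iff_left hVpos hVlt).1 hcard

theorem stmt_3 (d : ℕ) :
    ∃ C : ℝ, 0 < C ∧
      ∀ (ν : MeasureTheory.Measure (EuclideanSpace ℝ (Fin d)))
        [MeasureTheory.IsProbabilityMeasure ν] (lam r : ℝ), 0 < lam → 0 < r →
        ν {x | ENNReal.ofReal lam * ν (Metric.closedBall x r) <
                ν (Metric.closedBall x (2 * r))}
          ≤ ENNReal.ofReal (C / lam) := by
  classical
  obtain ⟨N, τ, hτ, hN⟩ :=
    HasBesicovitchCovering.no_satelliteConfig (α := EuclideanSpace ℝ (Fin d))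
  refine ⟨((N * 3 ^ d + 1 : ℕ) : ℝ), by positivity, ?_⟩
  intro ν _ lam r hlam hr
  set F := {x : EuclideanSpace ℝ (Fin d) |
    ENNReal.ofReal lam * ν (Metric.closedBall x r) < ν (Metric.closedBall x (2 * r))} with hF
  rcases eq_empty_or_nonempty F with hFe | hFne
  · rw [hFe]
    simp
  haveI : Nonempty ↥F := hFne.to_subtype
  set q : Besicovitch.BallPackage ↥F (EuclideanSpace ℝ (Fin d)) :=
    { c := fun x => (x : EuclideanSpace ℝ (Fin d))
      r := fun _ => r
      rpos := fun _ => hr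
      r_bound := r
      r_le := fun _ => le_rfl } with hq
  obtain ⟨s, hs_disj, hs_cover⟩ := Besicovitch.exist_disjoint_covering_families hτ hN q
  have hcount : ∀ i, (s i).Countable := by
    intro i
    refine (hs_disj i).countable_of_nonempty_interior fun j _ => ?_
    refine ⟨q.c j, ?_⟩
    exact mem_interior_iff_mem_nhds.2 (closedBall_mem_nhds _ hr)
  -- each center belongs to F
  have hmem : ∀ j : ↥F, ν (closedBall (q.c j) r)
      ≤ (ENNReal.ofReal lam)⁻¹ * ν (closedBall (q.c j) (2 * r)) := by
    intro j
    have hj := j.2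
    simp only [hF, Set.mem_setOf_eq] at hj
    have h0 : ENNReal.ofReal lam ≠ 0 := (ENNReal.ofReal_pos.2 hlam).ne'
    calc ν (closedBall (q.c j) r)
        = (ENNReal.ofReal lam)⁻¹ * (ENNReal.ofReal lam * ν (closedBall (q.c j) r)) := by
          rw [← mul_assoc, ENNReal.inv_mul_cancel h0 ENNReal.ofReal_ne_top, one_mul]
      _ ≤ (ENNReal.ofReal lam)⁻¹ * ν (closedBall (q.c j) (2 * r)) := by
          exact mul_le_mul_right hj.le _
  have key : ∀ i, ν (⋃ j ∈ s i, ball (q.c j) r)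
      ≤ (ENNReal.ofReal lam)⁻¹ * 3 ^ d := by
    intro i
    haveI : Countable ↥(s i) := (hcount i).to_subtype
    have hdisj : Pairwise (Function.onFun Disjoint fun j : ↥(s i) => closedBall (q.c j) r) := by
      intro a b hab
      exact hs_disj i a.2 b.2 (fun h => hab (Subtype.ext h))
    have hpack : ∑' j : ↥(s i), ν (closedBall (q.c j) (2 * r)) ≤ 3 ^ d := by
      have h1 : ∀ j : ↥(s i), ν (closedBall (q.c j) (2 * r))
          = ∫⁻ y, (closedBall (q.c (j : ↥F)) (2 * r)).indicator (1 : EuclideanSpace ℝ (Fin d) → ℝ≥0∞) y ∂ν :=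
        fun j => (lintegral_indicator_one measurableSet_closedBall).symm
      calc ∑' j : ↥(s i), ν (closedBall (q.c j) (2 * r))
          = ∫⁻ y, ∑' j : ↥(s i),
              (closedBall (q.c (j : ↥F)) (2 * r)).indicator (1 : EuclideanSpace ℝ (Fin d) → ℝ≥0∞) y ∂ν := by
            simp_rw [h1]
            exact (lintegral_tsum fun j =>
              ((measurable_one.indicator measurableSet_closedBall).aemeasurable)).symm
        _ ≤ ∫⁻ _, (3 : ℝ≥0∞) ^ d ∂ν := by
            refine lintegral_mono fun y => ?_
            exact packing_bound d hr (fun j : ↥(s i) => q.c j) hdisj y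
        _ = 3 ^ d := by simp
    calc ν (⋃ j ∈ s i, ball (q.c j) r)
        ≤ ∑' j : ↥(s i), ν (ball (q.c j) r) := measure_biUnion_le ν (hcount i) _
      _ ≤ ∑' j : ↥(s i), (ENNReal.ofReal lam)⁻¹ * ν (closedBall (q.c j) (2 * r)) :=
          ENNReal.tsum_le_tsum fun j =>
            le_trans (measure_mono ball_subset_closedBall) (hmem j)
      _ = (ENNReal.ofReal lam)⁻¹ * ∑' j : ↥(s i), ν (closedBall (q.c j) (2 * r)) :=
          ENNReal.tsum_mul_left
      _ ≤ (ENNReal.ofReal lam)⁻¹ * 3 ^ d := mul_le_mul_right hpack _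
  have hcover : F ⊆ ⋃ i : Fin N, ⋃ j ∈ s i, ball (q.c j) r := by
    intro x hx
    exact hs_cover ⟨⟨x, hx⟩, rfl⟩
  calc ν F ≤ ν (⋃ i : Fin N, ⋃ j ∈ s i, ball (q.c j) r) := measure_mono hcover
    _ ≤ ∑ i : Fin N, ν (⋃ j ∈ s i, ball (q.c j) r) := measure_iUnion_fintype_le ν _
    _ ≤ ∑ _i : Fin N, (ENNReal.ofReal lam)⁻¹ * 3 ^ d := Finset.sum_le_sum fun i _ => key i
    _ = N * ((ENNReal.ofReal lam)⁻¹ * 3 ^ d) := by simp [Finset.sum_const, mul_comm]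
    _ ≤ ENNReal.ofReal (((N * 3 ^ d + 1 : ℕ) : ℝ) / lam) := by
        rw [ENNReal.ofReal_div_of_pos hlam, ENNReal.ofReal_natCast]
        rw [ENNReal.div_eq_inv_mul]
        rw [← mul_assoc, mul_comm (N : ℝ≥0∞) (ENNReal.ofReal lam)⁻¹, mul_assoc]
        refine mul_le_mul_right ?_ _
        push_cast
        exact le_add_of_nonneg_right zero_le_one
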